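/- arXiv:2003.00604 — 3 statements merged into one kernel-verified Lean document; each statement's English description precedes it below -/
import Mathlib

section
/- A polynomial P in the polynomial ring E[u,z] satisfies σ₁(P) = P if and only if P lies in the E-subalgebra generated by w and z; that is, the fixed subalgebra of σ₁ equals Algebra.adjoin E {w, z}. -/
open MvPolynomial

noncomputable section

/-- The field `E = ℚ(ω)`. -/
abbrev E : Type := CyclotomicField 3 ℚ

/-- The variable `u` in `E[u,z]`. -/
abbrev u : MvPolynomial (Fin 2) E := X 0

/-- The variable `z` in `E[u,z]`. -/
abbrev z : MvPolynomial (Fin 2) E := X 1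

/-- The `E`-algebra endomorphism `σ₁` of `E[u,z]` with
`σ₁(u) = ω̄·u + (ω̄−1)·z` and `σ₁(z) = z`, where `ω̄ = ω²`. -/
def σ₁ (ω : E) : MvPolynomial (Fin 2) E →ₐ[E] MvPolynomial (Fin 2) E :=
  aeval ![C (ω ^ 2) * u + C (ω ^ 2 - 1) * z, z]

/-- `w = u³/3 + u²z + uz²`. -/
def w : MvPolynomial (Fin 2) E := C ((3 : E)⁻¹) * u ^ 3 + u ^ 2 * z + u * z ^ 2

def τ : MvPolynomial (Fin 2) E →ₐ[E] MvPolynomial (Fin 2) E := aeval ![u + z, z]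
def τ' : MvPolynomial (Fin 2) E →ₐ[E] MvPolynomial (Fin 2) E := aeval ![u - z, z]
def δ (ω : E) : MvPolynomial (Fin 2) E →ₐ[E] MvPolynomial (Fin 2) E := aeval ![C (ω ^ 2) * u, z]

lemma ττ' : ∀ P, τ (τ' P) = P := by
  intro P
  rw [← AlgHom.comp_apply]
  have h : τ.comp τ' = AlgHom.id E _ := by
    apply MvPolynomial.algHom_ext
    intro i
    fin_cases i <;> simp [τ, τ'] <;> ring
  rw [h]; rfl

lemma τ'τ : ∀ P, τ' (τ P) = P := by
  intro P
  rw [← AlgHom.comp_apply]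
  have h : τ'.comp τ = AlgHom.id E _ := by
    apply MvPolynomial.algHom_ext
    intro i
    fin_cases i <;> simp [τ, τ'] <;> ring
  rw [h]; rfl

lemma τ'_inj : Function.Injective τ' := Function.LeftInverse.injective ττ'

lemma mon_eq (d : Fin 2 →₀ ℕ) (c : E) : monomial d c = C c * u ^ d 0 * z ^ d 1 := by
  rw [monomial_eq, Finsupp.prod_fintype _ _ (fun i => pow_zero _), Fin.prod_univ_two, mul_assoc]

lemma delta_monomial (ω : E) (d : Fin 2 →₀ ℕ) (c : E) :
    δ ω (monomial d c) = monomial d ((ω ^ 2) ^ d 0 * c) := by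
  rw [mon_eq, mon_eq]
  simp only [δ, map_mul, map_pow, aeval_X, aeval_C, Matrix.cons_val_zero, Matrix.cons_val_one,
    Matrix.head_cons, algebraMap_eq, map_pow (C : E →+* _)]
  ring

lemma coeff_delta (ω : E) (Q : MvPolynomial (Fin 2) E) (e : Fin 2 →₀ ℕ) :
    coeff e (δ ω Q) = (ω ^ 2) ^ e 0 * coeff e Q := by
  conv_lhs => rw [Q.as_sum, map_sum]
  rw [coeff_sum]
  simp only [delta_monomial, coeff_monomial]
  rw [Finset.sum_ite_eq' Q.support e]
  by_cases he : e ∈ Q.support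
  · simp [he]
  · simp [he, notMem_support_iff.mp he]

lemma diag (ω : E) (hω : IsPrimitiveRoot ω 3) (Q : MvPolynomial (Fin 2) E) :
    δ ω Q = Q ↔ Q ∈ Algebra.adjoin E ({u ^ 3, z} : Set (MvPolynomial (Fin 2) E)) := by
  have hω2 : IsPrimitiveRoot (ω ^ 2) 3 := hω.pow_of_coprime 2 (by norm_num)
  constructor
  · intro h
    rw [Q.as_sum]
    apply Subalgebra.sum_mem
    intro d hd
    have hc := congrArg (coeff d) h
    rw [coeff_delta] at hc
    have hne : coeff d Q ≠ 0 := mem_support_iff.mp hd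
    have h1 : (ω ^ 2) ^ d 0 = 1 := by
      have := mul_right_cancel₀ hne (hc.trans (one_mul (coeff d Q)).symm)
      exact this
    have h3 : 3 ∣ d 0 := hω2.pow_eq_one_iff_dvd _ |>.mp h1
    obtain ⟨k, hk⟩ := h3
    rw [mon_eq, hk, pow_mul]
    exact mul_mem (mul_mem (Subalgebra.algebraMap_mem _ _)
      (pow_mem (Algebra.subset_adjoin (by simp)) k))
      (pow_mem (Algebra.subset_adjoin (by simp)) _)
  · intro h
    have h3 : ω ^ 3 = 1 := hω.pow_eq_one
    induction h using Algebra.adjoin_induction with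
    | mem x hx =>
      rcases hx with hx | hx
      · subst hx
        show δ ω (u ^ 3) = u ^ 3
        rw [map_pow]
        have : δ ω u = C (ω ^ 2) * u := by simp [δ]
        rw [this, mul_pow, ← map_pow, ← pow_mul]
        have : ω ^ (2 * 3) = 1 := by
          rw [mul_comm, pow_mul, h3, one_pow]
        rw [this, map_one, one_mul]
      · simp only [Set.mem_singleton_iff] at hx
        subst hx
        simp [δ]
    | algebraMap r => simp [δ, algebraMap_eq]
    | add x y hx hy ihx ihy => rw [map_add, ihx, ihy]
    | mul x y hx hy ihx ihy => rw [map_mul, ihx, ihy]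

lemma sigma_eq (ω : E) : ∀ P, σ₁ ω P = τ (δ ω (τ' P)) := by
  intro P
  have h : σ₁ ω = (τ.comp (δ ω)).comp τ' := by
    apply MvPolynomial.algHom_ext
    intro i
    fin_cases i <;> simp [σ₁, τ, τ', δ] <;> ring
  rw [h]; rfl


/-- a polynomial `P ∈ E[u,z]` satisfies `σ₁(P) = P` iff `P` lies in the
`E`-subalgebra generated by `w` and `z`. -/
theorem stmt_1 (ω : E) (hω : IsPrimitiveRoot ω 3) (P : MvPolynomial (Fin 2) E) :
    σ₁ ω P = P ↔ P ∈ Algebra.adjoin E ({w, z} : Set (MvPolynomial (Fin 2) E)) := by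
  have h3ne : (3 : E) ≠ 0 := by norm_num
  have hτ'w : τ' w = C ((3:E)⁻¹) * (u ^ 3 - z ^ 3) := by
    simp only [w, τ', map_add, map_mul, map_pow, aeval_X, aeval_C, Matrix.cons_val_zero,
      Matrix.cons_val_one, Matrix.head_cons, algebraMap_eq]
    have hC3 : (C ((3:E)⁻¹) : MvPolynomial (Fin 2) E) * 3 = 1 := by
      rw [show (3 : MvPolynomial (Fin 2) E) = C (3:E) from (map_ofNat C 3).symm, ← C_mul]
      norm_num
    linear_combination (u * z ^ 2 - u ^ 2 * z) * hC3
  have hadj : Algebra.adjoin E ({u ^ 3, z} : Set (MvPolynomial (Fin 2) E)) =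
      Algebra.adjoin E ({τ' w, z} : Set (MvPolynomial (Fin 2) E)) := by
    apply le_antisymm <;> rw [Algebra.adjoin_le_iff] <;> rintro x (rfl | rfl)
    · rw [hτ'w]
      have hu3 : (u:MvPolynomial (Fin 2) E) ^ 3 = C 3 * (C ((3:E)⁻¹) * (u ^ 3 - z ^ 3)) + z ^ 3 := by
        rw [← mul_assoc, ← C_mul, mul_inv_cancel₀ h3ne, C_1, one_mul]
        ring
      rw [← hτ'w] at hu3 ⊢
      rw [hu3]
      exact add_mem (mul_mem (Subalgebra.algebraMap_mem _ _) (Algebra.subset_adjoin (by simp)))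
        (pow_mem (Algebra.subset_adjoin (by simp)) _)
    · exact Algebra.subset_adjoin (by simp)
    · rw [hτ'w]
      exact mul_mem (Subalgebra.algebraMap_mem _ _)
        (sub_mem (Algebra.subset_adjoin (by simp)) (pow_mem (Algebra.subset_adjoin (by simp)) _))
    · exact Algebra.subset_adjoin (by simp)
  have hmap : Subalgebra.map τ' (Algebra.adjoin E ({w, z} : Set (MvPolynomial (Fin 2) E))) =
      Algebra.adjoin E ({τ' w, z} : Set (MvPolynomial (Fin 2) E)) := by
    rw [AlgHom.map_adjoin]
    congr 1
    rw [Set.image_insert_eq, Set.image_singleton]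
    congr 1
    simp [τ']
  constructor
  · intro h
    rw [sigma_eq] at h
    have h' : δ ω (τ' P) = τ' P := by
      apply τ'_inj
      conv_rhs => rw [← h]
      rw [τ'τ]
    rw [diag ω hω, hadj, ← hmap] at h'
    obtain ⟨Q, hQ, hQP⟩ := h'
    rwa [← τ'_inj hQP]
  · intro h
    rw [sigma_eq]
    have h' : τ' P ∈ Algebra.adjoin E ({τ' w, z} : Set (MvPolynomial (Fin 2) E)) := by
      rw [← hmap]
      exact ⟨P, h, rfl⟩
    rw [← hadj, ← diag ω hω] at h'
    rw [h', ττ']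

end
end

section
/- In the polynomial ring ℚ[a,b,x] in three variables, the polynomial 3x⁴ + 6ax² + 12bx − a² divides the polynomial 576·(x³ + ax + b)·(6ax³ − 9bx² + 10a²x + 9ab)² − 3x·Δ(a,b)², where Δ(a,b) := 16(−4a³ − 27b²). (This expresses that on the 3-division locus of the elliptic curve y² = x³+ax+b, the element z := −24yΔ⁻¹(10a²x + 9ab + 6ax³ − 9bx²) satisfies z² = 3x.) -/
open MvPolynomial

noncomputable section

/-- The indeterminate `a` in `ℚ[a,b,x]`. -/
abbrev a : MvPolynomial (Fin 3) ℚ := X 0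

/-- The indeterminate `b` in `ℚ[a,b,x]`. -/
abbrev b : MvPolynomial (Fin 3) ℚ := X 1

/-- The indeterminate `x` in `ℚ[a,b,x]`. -/
abbrev x : MvPolynomial (Fin 3) ℚ := X 2

/-- `Δ(a,b) = 16(−4a³ − 27b²)`. -/
def Δ : MvPolynomial (Fin 3) ℚ := 16 * (-4 * a ^ 3 - 27 * b ^ 2)

/-- in `ℚ[a,b,x]`, the 3-division polynomial `3x⁴ + 6ax² + 12bx − a²` divides
`576·(x³ + ax + b)·(6ax³ − 9bx² + 10a²x + 9ab)² − 3x·Δ(a,b)²`. -/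
theorem stmt_3 :
    (3 * x ^ 4 + 6 * a * x ^ 2 + 12 * b * x - a ^ 2) ∣
      (576 * (x ^ 3 + a * x + b) *
          (6 * a * x ^ 3 - 9 * b * x ^ 2 + 10 * a ^ 2 * x + 9 * a * b) ^ 2
        - 3 * x * Δ ^ 2) := by
  refine ⟨15552 * b^2 * x^3 - 46656 * b^3 - 20736 * a * b * x^4 + 15552 * a * b^2 * x
    + 6912 * a^2 * x^5 - 13824 * a^2 * b * x^2 + 16128 * a^3 * x^3 + 12288 * a^4 * x, ?_⟩
  unfold Δ
  ring

end
end

section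
/- Let k be an algebraically closed field of characteristic zero and let a, b ∈ k. Write F(a,b,Z) := Z⁸ + 18aZ⁴ + 108bZ² − 27a², and let z₁, …, z₈ ∈ k be its roots with multiplicity, so F(a,b,Z) = ∏_{i=1}^{8}(Z − zᵢ). Then the discriminant of F satisfies ∏_{1 ≤ i < j ≤ 8} (zᵢ − zⱼ)² = −2²⁴·3²¹·a²·(4a³ + 27b²)⁴. (Equivalently, disc F(a,b,·) = −2⁸·3²¹·a²·Δ⁴ with Δ = 16(−4a³−27b²).) -/
open Polynomial

/-- let `k` be an algebraically closed field of characteristic zero, `a b : k`,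
and let `z₁, …, z₈` be the roots with multiplicity of
`F(a,b,Z) = Z⁸ + 18aZ⁴ + 108bZ² − 27a²`.  Then
`∏_{i<j} (zᵢ − zⱼ)² = −2²⁴·3²¹·a²·(4a³ + 27b²)⁴`. -/
theorem stmt_5 (k : Type*) [Field k] [IsAlgClosed k] [CharZero k] (a b : k) (z : Fin 8 → k)
    (hz : (X ^ 8 + C (18 * a) * X ^ 4 + C (108 * b) * X ^ 2 - C (27 * a ^ 2) : k[X]) =
      ∏ i, (X - C (z i))) :
    ∏ p ∈ Finset.univ.filter (fun p : Fin 8 × Fin 8 => p.1 < p.2), (z p.1 - z p.2) ^ 2 =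
      -2 ^ 24 * 3 ^ 21 * a ^ 2 * (4 * a ^ 3 + 27 * b ^ 2) ^ 4 := by
  -- evaluation of F
  have hev : ∀ c : k, c ^ 8 + 18*a*c^4 + 108*b*c^2 - 27*a^2 = ∏ i, (c - z i) := by
    intro c
    have h := congrArg (eval c) hz
    simpa [eval_prod] using h
  have hzc : ∀ c : k, ∏ i, (z i - c) = c ^ 8 + 18*a*c^4 + 108*b*c^2 - 27*a^2 := by
    intro c
    have h : ∀ i ∈ Finset.univ, z i - c = -1 * (c - z i) := fun i _ => by ring
    rw [Finset.prod_congr rfl h, Finset.prod_mul_distrib, Finset.prod_const, ← hev c]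
    norm_num
  -- derivative of F
  have hdp : derivative (∏ i : Fin 8, (X - C (z i))) =
      ∑ i : Fin 8, ∏ j ∈ Finset.univ.erase i, (X - C (z j)) := by
    rw [Finset.prod_eq_multiset_prod, derivative_prod]
    simp only [derivative_sub, derivative_X, derivative_C, sub_zero, mul_one]
    rw [Finset.sum_eq_multiset_sum]
    simp only [Finset.prod_eq_multiset_prod, Finset.erase_val]
  have hder : ∀ i, 8*(z i)^7 + 72*a*(z i)^3 + 216*b*(z i)
      = ∏ j ∈ Finset.univ.erase i, (z i - z j) := by
    intro i
    have h := congrArg (fun p => eval (z i) (derivative p)) hz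
    simp only [hdp] at h
    simp only [derivative_sub, derivative_add, derivative_pow, derivative_mul, derivative_C,
      derivative_X, eval_finset_sum, eval_prod, eval_mul, eval_sub, eval_add, eval_pow,
      eval_X, eval_C, eval_one, eval_zero] at h
    rw [Finset.sum_eq_single i] at h
    · rw [← h]; push_cast; ring
    · intro j _ hj
      exact Finset.prod_eq_zero (Finset.mem_erase.2 ⟨hj.symm, Finset.mem_univ i⟩) (by simp)
    · simp
  -- combinatorial identities
  have hB : ∏ i : Fin 8, ∏ j ∈ Finset.univ.erase i, (z i - z j)
      = ∏ p ∈ Finset.univ.filter (fun p : Fin 8 × Fin 8 => p.1 ≠ p.2), (z p.1 - z p.2) := by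
    rw [Finset.prod_sigma']
    apply Finset.prod_nbij' (fun p => (p.1, p.2)) (fun p => ⟨p.1, p.2⟩) <;>
      simp +contextual [Finset.mem_sigma, eq_comm, Ne, not_imp_not]
  have hcard : (Finset.univ.filter (fun p : Fin 8 × Fin 8 => p.1 < p.2)).card = 28 := by decide
  have hA : ∏ p ∈ Finset.univ.filter (fun p : Fin 8 × Fin 8 => p.1 ≠ p.2), (z p.1 - z p.2)
      = ∏ p ∈ Finset.univ.filter (fun p : Fin 8 × Fin 8 => p.1 < p.2), (z p.1 - z p.2) ^ 2 := by
    have hsplit : (Finset.univ.filter (fun p : Fin 8 × Fin 8 => p.1 ≠ p.2))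
        = (Finset.univ.filter (fun p : Fin 8 × Fin 8 => p.1 < p.2))
          ∪ (Finset.univ.filter (fun p : Fin 8 × Fin 8 => p.2 < p.1)) := by
      ext p
      simp only [Finset.mem_filter, Finset.mem_univ, true_and, Finset.mem_union]
      exact ne_iff_lt_or_gt
    have hdisj : Disjoint (Finset.univ.filter (fun p : Fin 8 × Fin 8 => p.1 < p.2))
        (Finset.univ.filter (fun p : Fin 8 × Fin 8 => p.2 < p.1)) := by
      rw [Finset.disjoint_filter]
      intro p _ h1 h2
      exact absurd h1 (not_lt_of_gt h2)
    rw [hsplit, Finset.prod_union hdisj]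
    have hswap : ∏ p ∈ Finset.univ.filter (fun p : Fin 8 × Fin 8 => p.2 < p.1), (z p.1 - z p.2)
        = ∏ p ∈ Finset.univ.filter (fun p : Fin 8 × Fin 8 => p.1 < p.2), (z p.2 - z p.1) := by
      apply Finset.prod_nbij' (fun p => (p.2, p.1)) (fun p => (p.2, p.1)) <;> simp
    rw [hswap, ← Finset.prod_mul_distrib]
    have h2 : ∀ p ∈ Finset.univ.filter (fun p : Fin 8 × Fin 8 => p.1 < p.2),
        (z p.1 - z p.2) * (z p.2 - z p.1) = -1 * (z p.1 - z p.2)^2 := by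
      intro p _; ring
    rw [Finset.prod_congr rfl h2, Finset.prod_mul_distrib, Finset.prod_const, hcard]
    norm_num
  by_cases ha : a = 0
  · -- degenerate case: 0 is a double root
    subst ha
    have h := hzc 0
    norm_num at h
    obtain ⟨i, -, hi⟩ := Finset.prod_eq_zero_iff.1 h
    have h0 : ∏ j ∈ Finset.univ.erase i, (z i - z j) = 0 := by
      rw [← hder i, hi]; ring
    obtain ⟨j, hj, hj0⟩ := Finset.prod_eq_zero_iff.1 h0
    have hji : j ≠ i := (Finset.mem_erase.1 hj).1
    have hzj : z j = 0 := by rw [hi] at hj0; linear_combination -hj0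
    have hfac : ∀ p : Fin 8 × Fin 8, p ∈ Finset.univ.filter
        (fun p : Fin 8 × Fin 8 => p.1 < p.2) → (z p.1 - z p.2)^2 = (z p.1 - z p.2)^2 := fun _ _ => rfl
    rcases lt_or_gt_of_ne hji with hlt | hgt
    · rw [Finset.prod_eq_zero (i := (j, i)) (by simp [hlt]) (by simp [hi, hzj])]
      ring
    · rw [Finset.prod_eq_zero (i := (i, j)) (by simp [hgt]) (by simp [hi, hzj])]
      ring
  · -- main case
    have hF : ∀ i, (z i)^8 + 18*a*(z i)^4 + 108*b*(z i)^2 - 27*a^2 = 0 := by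
      intro i
      rw [hev (z i)]
      exact Finset.prod_eq_zero (Finset.mem_univ i) (by ring)
    have hprodz : ∏ i, z i = -(27*a^2) := by
      have h := hzc 0
      norm_num at h
      linear_combination h
    -- roots of the auxiliary quadratic a u² + 9bu − 3a²
    obtain ⟨s, hs⟩ := IsAlgClosed.exists_root
      (p := (C a * X ^ 2 + C (9*b) * X + C (-(3*a^2)) : k[X]))
      (by rw [Polynomial.degree_quadratic ha]; exact (by norm_num : (2:WithBot ℕ) ≠ 0))
    rw [IsRoot, eval_add, eval_add, eval_mul, eval_mul, eval_C, eval_C, eval_C, eval_pow,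
      eval_X] at hs
    have hq : a * s^2 + 9*b*s - 3*a^2 = 0 := by linear_combination hs
    have hs0 : s ≠ 0 := by
      intro h
      apply ha
      rw [h] at hq
      have h2 : a^2 = 0 := by linear_combination (-1/3 : k) * hq
      exact pow_eq_zero_iff two_ne_zero |>.1 h2
    set t : k := -3*a/s with ht
    have h_mul : s * t = -3*a := by rw [ht]; field_simp
    have h_add : a*(s+t) = -9*b := by
      apply mul_left_cancel₀ hs0
      linear_combination hq + a * h_mul
    have hPsPt : a^2 * ((s^4+18*a*s^2+108*b*s-27*a^2) * (t^4+18*a*t^2+108*b*t-27*a^2))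
        = 81*(4*a^3+27*b^2)^2 := by
      have h4 : s^4 * (a^2 * ((s^4+18*a*s^2+108*b*s-27*a^2) * (t^4+18*a*t^2+108*b*t-27*a^2))
          - 81*(4*a^3+27*b^2)^2) = 0 := by
        linear_combination (1*s^7*t^3*a^2 + 18*s^7*t*a^3 + 108*s^7*a^2*b + (-3)*s^6*t^2*a^3 + (-54)*s^6*a^4 + 18*s^5*t^3*a^3 + 333*s^5*t*a^4 + 1944*s^5*a^3*b + 108*s^4*t^3*a^2*b + (-54)*s^4*t^2*a^4 + 1944*s^4*t*a^3*b + (-999)*s^4*a^5 + 11664*s^4*a^2*b^2 + (-27)*s^3*t^3*a^4 + (-324)*s^3*t^2*a^3*b + (-324)*s^3*t*a^5 + (-8748)*s^3*a^4*b + 81*s^2*t^2*a^5 + 972*s^2*t*a^4*b + 972*s^2*a^6 + (-243)*s*t*a^6 + (-2916)*s*a^5*b + 729*a^7) * h_mul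
          + ((-27)*s^6*a^3 + (-81)*s^5*a^2*b + (-405)*s^4*a^4 + 729*s^4*a*b^2 + (-5346)*s^3*a^3*b + (-6561)*s^3*b^3 + 1215*s^2*a^5 + (-2187)*s^2*a^2*b^2 + (-729)*s*a^4*b + 729*a^6) * hq
      rcases mul_eq_zero.1 h4 with h | h
      · exact absurd (pow_eq_zero_iff (by norm_num : (4:ℕ) ≠ 0) |>.1 h) hs0
      · linear_combination h
    -- square roots of s and t
    obtain ⟨rs, hrs⟩ := IsAlgClosed.exists_pow_nat_eq (k := k) s (n := 2) (by norm_num)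
    obtain ⟨rt, hrt⟩ := IsAlgClosed.exists_pow_nat_eq (k := k) t (n := 2) (by norm_num)
    have hPval : ∀ w c : k, c^2 = w →
        c^8 + 18*a*c^4 + 108*b*c^2 - 27*a^2 = w^4 + 18*a*w^2 + 108*b*w - 27*a^2 := by
      intro w c hc
      rw [← hc]; ring
    have key2 : ∀ w c : k, c^2 = w →
        ∏ i, ((z i)^2 - w) = (w^4 + 18*a*w^2 + 108*b*w - 27*a^2)^2 := by
      intro w c hc
      have h : ∀ i ∈ Finset.univ, (z i)^2 - w = (z i - c) * (z i - (-c)) := by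
        intro i _
        linear_combination hc
      rw [Finset.prod_congr rfl h, Finset.prod_mul_distrib, hzc c, hzc (-c),
        hPval w c hc, hPval w (-c) (by rw [← hc]; ring)]
      exact (pow_two _).symm
    -- the quartic factor product
    have hGf : ∀ i, a*(z i)^4 + 9*b*(z i)^2 - 3*a^2 = a*((z i)^2 - s)*((z i)^2 - t) := by
      intro i
      linear_combination (z i)^2 * h_add + (-a) * h_mul
    have hGprod : ∏ i, (a*(z i)^4 + 9*b*(z i)^2 - 3*a^2)
        = a^8 * ((s^4+18*a*s^2+108*b*s-27*a^2)^2 * (t^4+18*a*t^2+108*b*t-27*a^2)^2) := by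
      have h : ∀ i ∈ Finset.univ, a*(z i)^4 + 9*b*(z i)^2 - 3*a^2
          = a*(((z i)^2 - s)*((z i)^2 - t)) := fun i _ => by rw [hGf i]; ring
      rw [Finset.prod_congr rfl h, Finset.prod_mul_distrib, Finset.prod_const,
        Finset.prod_mul_distrib, key2 s rs hrs, key2 t rt hrt]
      simp
    have hQG : ∀ i, (z i)^2 * ((z i)^6 + 9*a*(z i)^2 + 27*b)
        = -9 * (a*(z i)^4 + 9*b*(z i)^2 - 3*a^2) := by
      intro i
      linear_combination hF i
    have hQtot : 729*a^4 * (∏ i, ((z i)^6 + 9*a*(z i)^2 + 27*b))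
        = 9^8 * (a^8 * ((s^4+18*a*s^2+108*b*s-27*a^2)^2 * (t^4+18*a*t^2+108*b*t-27*a^2)^2)) := by
      have h1 : ∏ i, ((z i)^2 * ((z i)^6 + 9*a*(z i)^2 + 27*b))
          = ∏ i, (-9 * (a*(z i)^4 + 9*b*(z i)^2 - 3*a^2)) :=
        Finset.prod_congr rfl (fun i _ => hQG i)
      rw [Finset.prod_mul_distrib, Finset.prod_mul_distrib, Finset.prod_const,
        Finset.prod_pow, hprodz, hGprod] at h1
      have hc8 : (Finset.univ : Finset (Fin 8)).card = 8 := by simp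
      rw [hc8] at h1
      linear_combination h1
    -- assemble
    rw [← hA, ← hB]
    have hstep : ∏ i : Fin 8, ∏ j ∈ Finset.univ.erase i, (z i - z j)
        = 8^8 * ((∏ i, z i) * ∏ i, ((z i)^6 + 9*a*(z i)^2 + 27*b)) := by
      rw [Finset.prod_congr rfl (fun i _ => (hder i).symm)]
      have h : ∀ i ∈ Finset.univ, 8*(z i)^7 + 72*a*(z i)^3 + 216*b*(z i)
          = 8 * (z i * ((z i)^6 + 9*a*(z i)^2 + 27*b)) := fun i _ => by ring
      rw [Finset.prod_congr rfl h, Finset.prod_mul_distrib, Finset.prod_const,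
        Finset.prod_mul_distrib]
      simp
    rw [hstep, hprodz]
    have hsq : (a^2 * ((s^4+18*a*s^2+108*b*s-27*a^2) * (t^4+18*a*t^2+108*b*t-27*a^2)))^2
        = (81*(4*a^3+27*b^2)^2)^2 := by rw [hPsPt]
    apply mul_left_cancel₀ (show (729*a^4 : k) ≠ 0 from mul_ne_zero (by norm_num)
      (pow_ne_zero 4 ha))
    linear_combination (8^8*(-(27*a^2))) * hQtot + (8^8*(-(27*a^2))*9^8*a^4) * hsq
end
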